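/- Fix an integer r ≥ 1 and let a : ℕ → ℝ be a nonnegative sequence such that ∑_{k=0}^∞ a_k·x^k = 1 − (r + 1/√(1−x))^{−2} for every real x ∈ [0,1). Then lim_{k→∞} k^{5/2}·a_k = 3r/(2√π); in other words a_k is asymptotically equivalent to (3r/(2√π))·k^{−5/2} as k → ∞. -/

import Mathlib

open Filter Real Set MeasureTheory

lemma tendsto_tsum_pow (a : ℕ → ℝ) (ha : ∀ k, 0 ≤ a k)
    (hs : Summable (fun k => a k * (4⁻¹ : ℝ) ^ k)) :
    Tendsto (fun x : ℝ => ∑' k, a k * x ^ k) (nhdsWithin 0 (Ioi 0)) (nhds (a 0)) := by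
  set M : ℝ := ∑' k, a (k + 1) * (4⁻¹ : ℝ) ^ k with hM
  have hs' : Summable (fun k => a (k + 1) * (4⁻¹ : ℝ) ^ (k + 1)) :=
    (summable_nat_add_iff (f := fun k => a k * (4⁻¹ : ℝ) ^ k) 1).2 hs
  have hs'' : Summable (fun k => a (k + 1) * (4⁻¹ : ℝ) ^ k) := by
    have := hs'.mul_left (4 : ℝ)
    refine this.congr fun k => ?_
    rw [pow_succ]
    ring
  have key : ∀ x : ℝ, x ∈ Ioo (0:ℝ) 4⁻¹ →
      a 0 ≤ (∑' k, a k * x ^ k) ∧ (∑' k, a k * x ^ k) ≤ a 0 + M * x := by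
    intro x hx
    have hx0 : 0 < x := hx.1
    have hx4 : x ≤ 4⁻¹ := hx.2.le
    have hsx : Summable (fun k => a k * x ^ k) := by
      refine Summable.of_nonneg_of_le (fun k => mul_nonneg (ha k) (pow_nonneg hx0.le k)) (fun k => ?_) hs
      exact mul_le_mul_of_nonneg_left (pow_le_pow_left₀ hx0.le hx4 k) (ha k)
    have hsx' : Summable (fun k => a (k + 1) * x ^ (k + 1)) :=
      (summable_nat_add_iff (f := fun k => a k * x ^ k) 1).2 hsx
    have hsx'' : Summable (fun k => a (k + 1) * x ^ k) := by
      have := hsx'.mul_left x⁻¹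
      refine this.congr fun k => ?_
      rw [pow_succ]
      field_simp
    have hzero : (∑' k, a k * x ^ k) = a 0 + ∑' k, a (k + 1) * x ^ (k + 1) := by
      simpa using Summable.tsum_eq_zero_add hsx
    have hfac : (∑' k, a (k + 1) * x ^ (k + 1)) = x * ∑' k, a (k + 1) * x ^ k := by
      rw [← tsum_mul_left]
      exact tsum_congr fun k => by rw [pow_succ]; ring
    have htail_nonneg : 0 ≤ ∑' k, a (k + 1) * x ^ k :=
      tsum_nonneg fun k => mul_nonneg (ha _) (pow_nonneg hx0.le _)
    have htail_le : (∑' k, a (k + 1) * x ^ k) ≤ M := by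
      refine Summable.tsum_le_tsum (fun k => ?_) hsx'' hs''
      exact mul_le_mul_of_nonneg_left (pow_le_pow_left₀ hx0.le hx4 k) (ha (k + 1))
    constructor
    · rw [hzero, hfac]
      nlinarith
    · rw [hzero, hfac]
      nlinarith
  have hmem : Ioo (0:ℝ) 4⁻¹ ∈ nhdsWithin (0:ℝ) (Ioi 0) :=
    Ioo_mem_nhdsGT_of_mem (by norm_num : (0:ℝ) ∈ Ico (0:ℝ) 4⁻¹)
  have h1 : Tendsto (fun _ : ℝ => a 0) (nhdsWithin 0 (Ioi 0)) (nhds (a 0)) := tendsto_const_nhds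
  have h2 : Tendsto (fun x : ℝ => a 0 + M * x) (nhdsWithin 0 (Ioi 0)) (nhds (a 0)) := by
    have : Tendsto (fun x : ℝ => a 0 + M * x) (nhds 0) (nhds (a 0 + M * 0)) := by
      exact (tendsto_const_nhds.add ((continuous_mul_left M).tendsto 0))
    simpa using this.mono_left nhdsWithin_le_nhds
  refine tendsto_of_tendsto_of_tendsto_of_le_of_le' h1 h2 ?_ ?_
  · filter_upwards [hmem] with x hx using (key x hx).1
  · filter_upwards [hmem] with x hx using (key x hx).2

lemma coeff_unique : ∀ (n : ℕ) (a c : ℕ → ℝ), (∀ k, 0 ≤ a k) → (∀ k, 0 ≤ c k) →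
    (∀ x : ℝ, 0 < x → x < 2⁻¹ → Summable (fun k => a k * x ^ k)) →
    (∀ x : ℝ, 0 < x → x < 2⁻¹ → Summable (fun k => c k * x ^ k)) →
    (∀ x : ℝ, 0 < x → x < 2⁻¹ → (∑' k, a k * x ^ k) = ∑' k, c k * x ^ k) →
    a n = c n := by
  intro n
  induction n with
  | zero =>
    intro a c ha hc hsa hsc heq
    have hta := tendsto_tsum_pow a ha (hsa 4⁻¹ (by norm_num) (by norm_num))
    have htc := tendsto_tsum_pow c hc (hsc 4⁻¹ (by norm_num) (by norm_num))
    have hev : (fun x : ℝ => ∑' k, a k * x ^ k) =ᶠ[nhdsWithin (0:ℝ) (Ioi 0)]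
        (fun x : ℝ => ∑' k, c k * x ^ k) := by
      filter_upwards [Ioo_mem_nhdsGT_of_mem (by norm_num : (0:ℝ) ∈ Ico (0:ℝ) 2⁻¹)] with x hx
      exact heq x hx.1 hx.2
    exact tendsto_nhds_unique (hta.congr' hev) htc
  | succ n IH =>
    intro a c ha hc hsa hsc heq
    have h0 : a 0 = c 0 := by
      have hta := tendsto_tsum_pow a ha (hsa 4⁻¹ (by norm_num) (by norm_num))
      have htc := tendsto_tsum_pow c hc (hsc 4⁻¹ (by norm_num) (by norm_num))
      have hev : (fun x : ℝ => ∑' k, a k * x ^ k) =ᶠ[nhdsWithin (0:ℝ) (Ioi 0)]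
          (fun x : ℝ => ∑' k, c k * x ^ k) := by
        filter_upwards [Ioo_mem_nhdsGT_of_mem (by norm_num : (0:ℝ) ∈ Ico (0:ℝ) 2⁻¹)] with x hx
        exact heq x hx.1 hx.2
      exact tendsto_nhds_unique (hta.congr' hev) htc
    have shift : ∀ (b : ℕ → ℝ), (∀ x : ℝ, 0 < x → x < 2⁻¹ → Summable (fun k => b k * x ^ k)) →
        ∀ x : ℝ, 0 < x → x < 2⁻¹ → Summable (fun k => b (k + 1) * x ^ k) := by
      intro b hsb x hx0 hx1
      have h1 : Summable (fun k => b (k + 1) * x ^ (k + 1)) :=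
        (summable_nat_add_iff (f := fun k => b k * x ^ k) 1).2 (hsb x hx0 hx1)
      refine (h1.mul_left x⁻¹).congr fun k => ?_
      rw [pow_succ]
      field_simp
    refine IH (fun k => a (k + 1)) (fun k => c (k + 1)) (fun k => ha _) (fun k => hc _)
      (shift a hsa) (shift c hsc) ?_
    intro x hx0 hx1
    have hsax := hsa x hx0 hx1
    have hscx := hsc x hx0 hx1
    have hza : (∑' k, a k * x ^ k) = a 0 + x * ∑' k, a (k + 1) * x ^ k := by
      rw [Summable.tsum_eq_zero_add hsax, ← tsum_mul_left]
      simp only [pow_zero, mul_one]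
      exact congrArg _ (tsum_congr fun k => by rw [pow_succ]; ring)
    have hzc : (∑' k, c k * x ^ k) = c 0 + x * ∑' k, c (k + 1) * x ^ k := by
      rw [Summable.tsum_eq_zero_add hscx, ← tsum_mul_left]
      simp only [pow_zero, mul_one]
      exact congrArg _ (tsum_congr fun k => by rw [pow_succ]; ring)
    have := heq x hx0 hx1
    rw [hza, hzc, h0] at this
    exact mul_left_cancel₀ (ne_of_gt hx0) (by linarith)

lemma arctan_integral_id (R b : ℝ) (hR : 1 ≤ R) (hb : 0 < b) (hRb : R * b ≠ 1) :
    (∫ v in Ioi (0:ℝ), v ^ 4 / ((R ^ 2 * v ^ 2 + 1) ^ 2 * (v ^ 2 + b ^ 2)))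
      = π * (1 + 2 * R * b) / (4 * R ^ 3 * (1 + R * b) ^ 2) := by
  have hR0 : (0:ℝ) < R := lt_of_lt_of_le one_pos hR
  set D : ℝ := 1 - R ^ 2 * b ^ 2 with hD
  have hD0 : D ≠ 0 := by
    have h1 : 1 + R * b > 0 := by positivity
    have : D = (1 - R * b) * (1 + R * b) := by ring
    rw [this]
    exact mul_ne_zero (sub_ne_zero.2 (Ne.symm hRb)) (ne_of_gt h1)
  set H : ℝ → ℝ := fun v =>
    (b ^ 3 / D ^ 2) * arctan (v / b)
      + ((1 - 3 * R ^ 2 * b ^ 2) / (2 * R ^ 3 * D ^ 2)) * arctan (R * v)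
      - (1 / (2 * R ^ 2 * D)) * (v / (R ^ 2 * v ^ 2 + 1)) with hH
  have hderiv : ∀ v : ℝ, HasDerivAt H (v ^ 4 / ((R ^ 2 * v ^ 2 + 1) ^ 2 * (v ^ 2 + b ^ 2))) v := by
    intro v
    have h1 : HasDerivAt (fun v : ℝ => arctan (v / b)) (1 / (1 + (v / b) ^ 2) * (1 / b)) v := by
      have := (Real.hasDerivAt_arctan (v / b)).comp v ((hasDerivAt_id v).div_const b)
      simp only [one_div] at this ⊢
      exact this
    have h2 : HasDerivAt (fun v : ℝ => arctan (R * v)) (1 / (1 + (R * v) ^ 2) * R) v := by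
      have := (Real.hasDerivAt_arctan (R * v)).comp v ((hasDerivAt_id v).const_mul R)
      simp only [mul_one] at this
      exact this
    have hden : R ^ 2 * v ^ 2 + 1 ≠ 0 := by positivity
    have h3 : HasDerivAt (fun v : ℝ => v / (R ^ 2 * v ^ 2 + 1))
        ((1 * (R ^ 2 * v ^ 2 + 1) - v * (R ^ 2 * (2 * v) + 0)) / (R ^ 2 * v ^ 2 + 1) ^ 2) v := by
      refine (hasDerivAt_id v).div ?_ hden
      have h := (((hasDerivAt_pow 2 v)).const_mul (R ^ 2)).add_const 1
      refine h.congr_deriv ?_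
      norm_num
    have := ((h1.const_mul (b ^ 3 / D ^ 2)).add
      (h2.const_mul ((1 - 3 * R ^ 2 * b ^ 2) / (2 * R ^ 3 * D ^ 2)))).sub
      (h3.const_mul (1 / (2 * R ^ 2 * D)))
    refine this.congr_deriv ?_
    have hb2 : (1 : ℝ) + (v / b) ^ 2 ≠ 0 := by positivity
    have hR2 : (1 : ℝ) + (R * v) ^ 2 ≠ 0 := by positivity
    have hvb : v ^ 2 + b ^ 2 ≠ 0 := by positivity
    field_simp
    ring
  have hcont : ContinuousWithinAt H (Ici 0) 0 := (hderiv 0).continuousAt.continuousWithinAt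
  have hnonneg : ∀ v ∈ Ioi (0:ℝ),
      0 ≤ v ^ 4 / ((R ^ 2 * v ^ 2 + 1) ^ 2 * (v ^ 2 + b ^ 2)) := fun v _ => by positivity
  have hlim : Tendsto H atTop (nhds ((b ^ 3 / D ^ 2) * (π / 2)
      + ((1 - 3 * R ^ 2 * b ^ 2) / (2 * R ^ 3 * D ^ 2)) * (π / 2) - (1 / (2 * R ^ 2 * D)) * 0)) := by
    have t1 : Tendsto (fun v : ℝ => arctan (v / b)) atTop (nhds (π / 2)) := by
      refine (tendsto_nhds_of_tendsto_nhdsWithin tendsto_arctan_atTop).comp ?_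
      exact Tendsto.atTop_div_const hb tendsto_id
    have t2 : Tendsto (fun v : ℝ => arctan (R * v)) atTop (nhds (π / 2)) := by
      refine (tendsto_nhds_of_tendsto_nhdsWithin tendsto_arctan_atTop).comp ?_
      exact Tendsto.const_mul_atTop hR0 tendsto_id
    have t3 : Tendsto (fun v : ℝ => v / (R ^ 2 * v ^ 2 + 1)) atTop (nhds 0) := by
      have hub : Tendsto (fun v : ℝ => (R ^ 2)⁻¹ * v⁻¹) atTop (nhds 0) := by
        simpa using tendsto_inv_atTop_zero.const_mul (R ^ 2)⁻¹
      refine tendsto_of_tendsto_of_tendsto_of_le_of_le' tendsto_const_nhds hub ?_ ?_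
      · filter_upwards [eventually_gt_atTop (0:ℝ)] with v hv
        positivity
      · filter_upwards [eventually_gt_atTop (0:ℝ)] with v hv
        rw [div_le_iff₀ (by positivity)]
        have : (R ^ 2)⁻¹ * v⁻¹ * (R ^ 2 * v ^ 2 + 1) = v + (R^2)⁻¹ * v⁻¹ := by
          field_simp
        rw [this]
        have : 0 < (R^2)⁻¹ * v⁻¹ := by positivity
        linarith
    exact ((t1.const_mul _).add (t2.const_mul _)).sub (t3.const_mul _)
  rw [integral_Ioi_of_hasDerivAt_of_nonneg hcont (fun v _ => hderiv v) hnonneg hlim]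
  have hH0 : H 0 = 0 := by simp [hH]
  rw [hH0]
  have h1 : (1:ℝ) + R * b ≠ 0 := by positivity
  have hpolyD : D = (1 - R * b) * (1 + R * b) := by ring
  have hRb' : 1 - R * b ≠ 0 := sub_ne_zero.2 (Ne.symm hRb)
  rw [sub_zero, mul_zero, sub_zero, hpolyD]
  field_simp
  have hsq : (1 - b * R) ^ 2 ≠ 0 := by rw [mul_comm]; exact pow_ne_zero 2 hRb'
  rw [div_eq_iff hsq]
  ring

noncomputable def phi (R : ℝ) (k : ℕ) (v : ℝ) : ℝ :=
  v ^ 4 / ((R ^ 2 * v ^ 2 + 1) ^ 2 * (1 + v ^ 2) ^ (k + 1))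

lemma phi_nonneg (R : ℝ) (k : ℕ) (v : ℝ) : 0 ≤ phi R k v := by
  unfold phi; positivity

lemma phi_cont (R : ℝ) (k : ℕ) : Continuous (phi R k) := by
  unfold phi
  refine Continuous.div (by continuity) (by continuity) fun v => by positivity

noncomputable def cc (r : ℕ) (k : ℕ) : ℝ := (4 * r / π) * ∫ v in Ioi (0:ℝ), phi r k v

lemma cc_nonneg (r : ℕ) (k : ℕ) : 0 ≤ cc r k := by
  unfold cc
  have : 0 ≤ ∫ v in Ioi (0:ℝ), phi r k v :=
    integral_nonneg fun v => phi_nonneg _ _ _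
  positivity

lemma phi_hasSum (R : ℝ) (x : ℝ) (hx0 : 0 ≤ x) (hx1 : x < 1) (v : ℝ) :
    HasSum (fun k => phi R k v * x ^ k)
      (v ^ 4 / ((R ^ 2 * v ^ 2 + 1) ^ 2 * (v ^ 2 + (1 - x)))) := by
  have h1v : (0:ℝ) < 1 + v ^ 2 := by positivity
  have hratio0 : 0 ≤ x / (1 + v ^ 2) := by positivity
  have hratio1 : x / (1 + v ^ 2) < 1 := by
    rw [div_lt_one h1v]; nlinarith
  have hgeo := hasSum_geometric_of_lt_one hratio0 hratio1
  have := hgeo.mul_left (v ^ 4 / ((R ^ 2 * v ^ 2 + 1) ^ 2 * (1 + v ^ 2)))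
  have hfun : ∀ k : ℕ, v ^ 4 / ((R ^ 2 * v ^ 2 + 1) ^ 2 * (1 + v ^ 2)) * (x / (1 + v ^ 2)) ^ k
      = phi R k v * x ^ k := by
    intro k
    unfold phi
    rw [div_pow, pow_succ, div_mul_div_comm, div_mul_eq_mul_div]
    congr 1
    ring
  have hval : v ^ 4 / ((R ^ 2 * v ^ 2 + 1) ^ 2 * (1 + v ^ 2)) * (1 - x / (1 + v ^ 2))⁻¹
      = v ^ 4 / ((R ^ 2 * v ^ 2 + 1) ^ 2 * (v ^ 2 + (1 - x))) := by
    have hden : 1 + v ^ 2 - x ≠ 0 := by nlinarith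
    have h2 : 1 - x / (1 + v ^ 2) = (1 + v ^ 2 - x) / (1 + v ^ 2) := by
      field_simp
    have hA : (R ^ 2 * v ^ 2 + 1) ^ 2 ≠ 0 := by positivity
    have h1x : (0:ℝ) < 1 - x := by linarith
    rw [h2, inv_div, div_mul_div_comm,
      div_eq_div_iff (by positivity) (mul_ne_zero hA (by nlinarith))]
    ring
  rw [funext hfun, hval] at this
  exact this

lemma phi_le (R : ℝ) (hR : 1 ≤ R) (k : ℕ) (v : ℝ) : phi R k v ≤ (1 + v ^ 2)⁻¹ := by
  have hR2 : (1:ℝ) ≤ R ^ 2 := by nlinarith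
  have hA : v ^ 2 ≤ R ^ 2 * v ^ 2 + 1 := by nlinarith [sq_nonneg v]
  have h1 : v ^ 4 ≤ (R ^ 2 * v ^ 2 + 1) ^ 2 := by
    calc v ^ 4 = (v ^ 2) ^ 2 := by ring
      _ ≤ (R ^ 2 * v ^ 2 + 1) ^ 2 := pow_le_pow_left₀ (sq_nonneg v) hA 2
  have h2 : (1 + v ^ 2) ≤ (1 + v ^ 2) ^ (k + 1) :=
    le_self_pow₀ (by nlinarith [sq_nonneg v]) (Nat.succ_ne_zero k)
  have h3 := mul_le_mul h1 h2 (by positivity) (by positivity)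
  unfold phi
  rw [inv_eq_one_div, div_le_div_iff₀ (by positivity) (by positivity)]
  nlinarith [h3]

lemma phi_integrableOn (R : ℝ) (hR : 1 ≤ R) (k : ℕ) : IntegrableOn (phi R k) (Ioi (0:ℝ)) := by
  refine Integrable.mono' integrable_inv_one_add_sq.integrableOn
    ((phi_cont R k).aestronglyMeasurable) ?_
  filter_upwards with v
  rw [Real.norm_of_nonneg (phi_nonneg R k v)]
  exact phi_le R hR k v

lemma hasSum_cc (r : ℕ) (hr : 1 ≤ r) (x : ℝ) (hx0 : 0 < x) (hx1 : x < 2⁻¹) :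
    HasSum (fun k => cc r k * x ^ k)
      ((1 + 2 * r * Real.sqrt (1 - x)) / (r ^ 2 * (1 + r * Real.sqrt (1 - x)) ^ 2)) := by
  set R := (r : ℝ) with hRdef
  have hR : 1 ≤ R := by rw [hRdef]; exact_mod_cast hr
  have hR0 : (0:ℝ) < R := lt_of_lt_of_le one_pos hR
  set b := Real.sqrt (1 - x) with hbdef
  have hx1' : x < 1 := lt_trans hx1 (by norm_num)
  have h1x : 0 < 1 - x := by linarith
  have hb0 : 0 < b := Real.sqrt_pos.2 h1x
  have hb2 : b ^ 2 = 1 - x := Real.sq_sqrt h1x.le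
  have hb1 : b ≤ 1 := by nlinarith
  have hRb : R * b ≠ 1 := by
    rcases eq_or_lt_of_le hr with h | h
    · have hR1 : R = 1 := by rw [hRdef, ← h]; norm_num
      have : b < 1 := by nlinarith
      rw [hR1, one_mul]
      exact ne_of_lt this
    · have h2r : (2:ℝ) ≤ R := by
        rw [hRdef]
        exact_mod_cast h
      have hb2' : (2:ℝ)⁻¹ < b ^ 2 := by rw [hb2]; linarith
      have : 1 < R * b := by nlinarith
      exact ne_of_gt this
  have hfc : Continuous (fun v : ℝ => v ^ 4 / ((R ^ 2 * v ^ 2 + 1) ^ 2 * (v ^ 2 + (1 - x)))) := by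
    refine Continuous.div (by continuity) (by continuity) fun v => ?_
    have : (0:ℝ) < v ^ 2 + (1 - x) := by positivity
    positivity
  have hfint : Integrable (fun v : ℝ => v ^ 4 / ((R ^ 2 * v ^ 2 + 1) ^ 2 * (v ^ 2 + (1 - x))))
      (volume.restrict (Ioi (0:ℝ))) := by
    refine Integrable.mono' ((integrable_inv_one_add_sq.const_mul (b ^ 2)⁻¹).integrableOn)
      hfc.aestronglyMeasurable ?_
    filter_upwards with v
    rw [Real.norm_of_nonneg (by positivity)]
    have hle1 : v ^ 4 ≤ (R ^ 2 * v ^ 2 + 1) ^ 2 := by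
      have hR2 : (1:ℝ) ≤ R ^ 2 := by nlinarith
      have hA : v ^ 2 ≤ R ^ 2 * v ^ 2 + 1 := by nlinarith [sq_nonneg v]
      calc v ^ 4 = (v ^ 2) ^ 2 := by ring
        _ ≤ (R ^ 2 * v ^ 2 + 1) ^ 2 := pow_le_pow_left₀ (sq_nonneg v) hA 2
    have hle2 : b ^ 2 * (1 + v ^ 2) ≤ v ^ 2 + (1 - x) := by nlinarith [sq_nonneg v]
    rw [div_le_iff₀ (by positivity)]
    calc v ^ 4 ≤ (R ^ 2 * v ^ 2 + 1) ^ 2 := hle1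
      _ = ((b ^ 2)⁻¹ * (b ^ 2 * (1 + v ^ 2)) * (1 + v ^ 2)⁻¹) * (R ^ 2 * v ^ 2 + 1) ^ 2 := by
          field_simp
      _ ≤ ((b ^ 2)⁻¹ * (v ^ 2 + (1 - x)) * (1 + v ^ 2)⁻¹) * (R ^ 2 * v ^ 2 + 1) ^ 2 := by
          gcongr
      _ = (b ^ 2)⁻¹ * (1 + v ^ 2)⁻¹ * ((R ^ 2 * v ^ 2 + 1) ^ 2 * (v ^ 2 + (1 - x))) := by ring
  have key : HasSum (fun k => (∫ v in Ioi (0:ℝ), phi R k v) * x ^ k)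
      (∫ v in Ioi (0:ℝ), v ^ 4 / ((R ^ 2 * v ^ 2 + 1) ^ 2 * (v ^ 2 + (1 - x)))) := by
    have hs := MeasureTheory.hasSum_integral_of_dominated_convergence
      (μ := volume.restrict (Ioi (0:ℝ)))
      (F := fun (k : ℕ) (v : ℝ) => phi R k v * x ^ k)
      (f := fun v => v ^ 4 / ((R ^ 2 * v ^ 2 + 1) ^ 2 * (v ^ 2 + (1 - x))))
      (fun k v => phi R k v * x ^ k)
      (fun k => ((phi_cont R k).mul continuous_const).aestronglyMeasurable)
      (fun k => by
        filter_upwards with v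
        rw [Real.norm_of_nonneg (mul_nonneg (phi_nonneg R k v) (pow_nonneg hx0.le k))])
      (by
        filter_upwards with v
        exact (phi_hasSum R x hx0.le hx1' v).summable)
      (by
        refine hfint.congr ?_
        filter_upwards with v
        exact ((phi_hasSum R x hx0.le hx1' v).tsum_eq).symm)
      (by
        filter_upwards with v
        exact phi_hasSum R x hx0.le hx1' v)
    have heqF : ∀ k : ℕ, (∫ v in Ioi (0:ℝ), phi R k v * x ^ k)
        = (∫ v in Ioi (0:ℝ), phi R k v) * x ^ k := fun k => integral_mul_const _ _
    simpa [heqF] using hs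
  have hval : (∫ v in Ioi (0:ℝ), v ^ 4 / ((R ^ 2 * v ^ 2 + 1) ^ 2 * (v ^ 2 + (1 - x))))
      = π * (1 + 2 * R * b) / (4 * R ^ 3 * (1 + R * b) ^ 2) := by
    rw [← arctan_integral_id R b hR hb0 hRb]
    refine setIntegral_congr_fun measurableSet_Ioi fun v _ => ?_
    rw [hb2]
  rw [hval] at key
  have := key.mul_left (4 * R / π)
  have hfin : (4 * R / π) * (π * (1 + 2 * R * b) / (4 * R ^ 3 * (1 + R * b) ^ 2))
      = (1 + 2 * R * b) / (R ^ 2 * (1 + R * b) ^ 2) := by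
    have hpi : π ≠ 0 := Real.pi_ne_zero
    have h1Rb : (1:ℝ) + R * b ≠ 0 := by positivity
    field_simp
  rw [hfin] at this
  have hfun : (fun k : ℕ => cc r k * x ^ k)
      = fun k : ℕ => 4 * R / π * ((∫ v in Ioi (0:ℝ), phi R k v) * x ^ k) := by
    funext k
    unfold cc
    ring
  rw [hfun]
  exact this

noncomputable def psi (R : ℝ) (k : ℕ) (w : ℝ) : ℝ :=
  w ^ 4 / ((R ^ 2 * w ^ 2 / k + 1) ^ 2 * (1 + w ^ 2 / k) ^ (k + 1))

lemma cc_eq (r k : ℕ) (hk : 1 ≤ k) :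
    (k:ℝ) ^ (5/2 : ℝ) * cc r k = (4 * r / π) * ∫ w in Ioi (0:ℝ), psi r k w := by
  have hk0 : (0:ℝ) < (k:ℝ) := by exact_mod_cast hk
  have hs0 : 0 < Real.sqrt k := Real.sqrt_pos.2 hk0
  have hs2 : (Real.sqrt k) ^ 2 = (k:ℝ) := Real.sq_sqrt hk0.le
  have hsub := integral_comp_mul_left_Ioi (phi r k) 0 (inv_pos.2 hs0)
  rw [mul_zero, inv_inv, smul_eq_mul] at hsub
  -- hsub : ∫ w in Ioi 0, phi r k ((√k)⁻¹ * w) = √k * ∫ v in Ioi 0, phi r k v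
  have hphi : ∀ w : ℝ, (k:ℝ) ^ 2 * phi r k ((Real.sqrt k)⁻¹ * w) = psi r k w := by
    intro w
    unfold phi psi
    have h2 : ((Real.sqrt k)⁻¹ * w) ^ 2 = w ^ 2 / k := by
      rw [mul_pow, inv_pow, hs2]
      ring
    have h4 : ((Real.sqrt k)⁻¹ * w) ^ 4 = w ^ 4 / (k:ℝ) ^ 2 := by
      have : ((Real.sqrt k)⁻¹ * w) ^ 4 = (((Real.sqrt k)⁻¹ * w) ^ 2) ^ 2 := by ring
      rw [this, h2, div_pow]
      ring
    rw [h2, h4]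
    have hden : ((r:ℝ) ^ 2 * (w ^ 2 / k) + 1) ^ 2 * (1 + w ^ 2 / k) ^ (k + 1) ≠ 0 := by
      have e1 : (0:ℝ) < (r:ℝ) ^ 2 * (w ^ 2 / k) + 1 := by positivity
      have e2 : (0:ℝ) < 1 + w ^ 2 / k := by positivity
      positivity
    have hform : (r:ℝ) ^ 2 * (w ^ 2 / k) + 1 = (r:ℝ) ^ 2 * w ^ 2 / k + 1 := by ring
    rw [← hform]
    field_simp
  calc (k:ℝ) ^ (5/2 : ℝ) * cc r k
      = (4 * r / π) * ((k:ℝ) ^ (5/2 : ℝ) * ∫ v in Ioi (0:ℝ), phi r k v) := by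
        unfold cc; ring
    _ = (4 * r / π) * ((k:ℝ) ^ 2 * ∫ w in Ioi (0:ℝ), phi r k ((Real.sqrt k)⁻¹ * w)) := by
        rw [hsub]
        congr 1
        rw [← mul_assoc]
        congr 1
        rw [Real.sqrt_eq_rpow, ← Real.rpow_natCast (k:ℝ) 2, ← Real.rpow_add hk0]
        norm_num
    _ = (4 * r / π) * ∫ w in Ioi (0:ℝ), (k:ℝ) ^ 2 * phi r k ((Real.sqrt k)⁻¹ * w) := by
        rw [MeasureTheory.integral_const_mul]
    _ = (4 * r / π) * ∫ w in Ioi (0:ℝ), psi r k w := by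
        congr 1
        exact integral_congr_ae (Eventually.of_forall fun w => hphi w)

lemma psi_le_bound (R : ℝ) (k : ℕ) (hk : 12 ≤ k) (w : ℝ) (hw : 0 ≤ w) :
    psi R k w ≤ 128 * w ^ 4 / (64 + w ^ 6) := by
  have hk0 : (0:ℝ) < (k:ℝ) := by
    have : (0:ℕ) < k := by omega
    exact_mod_cast this
  set u : ℝ := w ^ 2 / k with hu
  have hu0 : 0 ≤ u := by positivity
  set m : ℕ := k / 3 with hm
  have h3m : 3 * m ≤ k := by omega
  have hmk : (k:ℝ) / 4 ≤ (m:ℝ) := by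
    have h1 : k ≤ 3 * m + 2 := by omega
    have h2 : (k:ℝ) ≤ 3 * m + 2 := by exact_mod_cast h1
    have h12 : (12:ℝ) ≤ (k:ℝ) := by exact_mod_cast hk
    nlinarith
  -- (1+u)^k ≥ w^6/64
  have hb1 : (1:ℝ) ≤ 1 + u := by linarith
  have step1 : ((1:ℝ) + u) ^ (3 * m) ≤ (1 + u) ^ k := pow_le_pow_right₀ hb1 h3m
  have step2 : ((m:ℝ) * u) ^ 3 ≤ ((1:ℝ) + u) ^ (3 * m) := by
    rw [show 3 * m = m * 3 by ring, pow_mul]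
    have hber : 1 + (m:ℝ) * u ≤ (1 + u) ^ m := by
      have := one_add_mul_le_pow (by linarith : (-2:ℝ) ≤ u) m
      simpa [mul_comm] using this
    have h1 : ((m:ℝ) * u) ^ 3 ≤ (1 + (m:ℝ) * u) ^ 3 := by
      have : (0:ℝ) ≤ (m:ℝ) * u := by positivity
      exact pow_le_pow_left₀ this (by linarith) 3
    exact h1.trans (pow_le_pow_left₀ (by positivity) hber 3)
  have hmu : w ^ 6 / 64 ≤ ((m:ℝ) * u) ^ 3 := by
    have h1 : w ^ 2 / 4 ≤ (m:ℝ) * u := by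
      have e1 : w ^ 2 / 4 = (w ^ 2 / (k:ℝ)) * ((k:ℝ) / 4) := by field_simp
      have h2 := mul_le_mul_of_nonneg_left hmk (show (0:ℝ) ≤ w ^ 2 / (k:ℝ) by positivity)
      rw [hu]
      calc w ^ 2 / 4 = (w ^ 2 / (k:ℝ)) * ((k:ℝ) / 4) := e1
        _ ≤ (w ^ 2 / (k:ℝ)) * (m:ℝ) := h2
        _ = (m:ℝ) * (w ^ 2 / (k:ℝ)) := by ring
    calc w ^ 6 / 64 = (w ^ 2 / 4) ^ 3 := by ring
      _ ≤ ((m:ℝ) * u) ^ 3 := pow_le_pow_left₀ (by positivity) h1 3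
  have hone : (1:ℝ) ≤ (1 + u) ^ k := one_le_pow₀ hb1
  have hw6 : w ^ 6 / 64 ≤ (1 + u) ^ k := le_trans hmu (le_trans step2 step1)
  have hkey : (64 + w ^ 6) / 128 ≤ (1 + u) ^ k := by
    have := add_le_add hone hw6
    linarith
  -- now bound psi
  have hA : (1:ℝ) ≤ (R ^ 2 * w ^ 2 / k + 1) ^ 2 := by
    have h0 : (0:ℝ) ≤ R ^ 2 * w ^ 2 / k := by positivity
    nlinarith
  have hden : (1 + u) ^ k ≤ (R ^ 2 * w ^ 2 / k + 1) ^ 2 * (1 + u) ^ (k + 1) := by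
    calc (1 + u) ^ k ≤ (1 + u) ^ (k + 1) := pow_le_pow_right₀ hb1 (Nat.le_succ k)
      _ ≤ (R ^ 2 * w ^ 2 / k + 1) ^ 2 * (1 + u) ^ (k + 1) := by
        nlinarith [pow_nonneg (by linarith : (0:ℝ) ≤ 1 + u) (k+1)]
  unfold psi
  rw [div_le_div_iff₀ (by positivity) (by positivity)]
  calc w ^ 4 * (64 + w ^ 6) = (64 + w ^ 6) / 128 * (128 * w ^ 4) := by ring
    _ ≤ (R ^ 2 * w ^ 2 / k + 1) ^ 2 * (1 + u) ^ (k + 1) * (128 * w ^ 4) := by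
        gcongr
        exact le_trans hkey hden
    _ = 128 * w ^ 4 * ((R ^ 2 * w ^ 2 / k + 1) ^ 2 * (1 + w ^ 2 / k) ^ (k + 1)) := by
        rw [hu]; ring

lemma bound_integrable : IntegrableOn (fun w : ℝ => 128 * w ^ 4 / (64 + w ^ 6)) (Ioi (0:ℝ)) := by
  have hcont : Continuous (fun w : ℝ => 128 * w ^ 4 / (64 + w ^ 6)) := by
    refine Continuous.div (by continuity) (by continuity) fun w => by positivity
  have h1 : IntegrableOn (fun w : ℝ => 128 * w ^ 4 / (64 + w ^ 6)) (Ioc (0:ℝ) 1) := by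
    refine (hcont.continuousOn.integrableOn_Icc (a := 0) (b := 1)).mono_set Ioc_subset_Icc_self
  have h2 : IntegrableOn (fun w : ℝ => 128 * w ^ 4 / (64 + w ^ 6)) (Ioi (1:ℝ)) := by
    refine Integrable.mono' ((integrableOn_Ioi_rpow_of_lt (by norm_num : (-2:ℝ) < -1)
      one_pos).const_mul 128) hcont.aestronglyMeasurable.restrict ?_
    filter_upwards [ae_restrict_mem measurableSet_Ioi] with w hw
    have hw1 : (1:ℝ) ≤ w := le_of_lt hw
    have hw0 : (0:ℝ) < w := lt_of_lt_of_le one_pos hw1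
    rw [Real.norm_of_nonneg (by positivity)]
    have hrw : w ^ (-2:ℝ) = (w ^ 2)⁻¹ := by
      rw [Real.rpow_neg hw0.le, ← Real.rpow_natCast w 2]
      norm_num
    rw [hrw, div_le_iff₀ (by positivity)]
    have hinv : 128 * (w ^ 2)⁻¹ * (64 + w ^ 6) = 128 * (64 / w ^ 2 + w ^ 4) := by
      field_simp
    rw [hinv]
    have h0 : (0:ℝ) ≤ 64 / w ^ 2 := by positivity
    linarith
  have := h1.union h2
  refine this.mono_set ?_
  intro w hw
  rcases le_or_gt w 1 with h | h
  · exact Or.inl ⟨hw, h⟩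
  · exact Or.inr h

lemma psi_tendsto (R : ℝ) (w : ℝ) :
    Tendsto (fun k : ℕ => psi R k w) atTop (nhds (w ^ 4 / Real.exp (w ^ 2))) := by
  have t0 : Tendsto (fun k : ℕ => (R ^ 2 * w ^ 2) / (k:ℝ)) atTop (nhds 0) :=
    tendsto_const_div_atTop_nhds_zero_nat _
  have t1 : Tendsto (fun k : ℕ => R ^ 2 * w ^ 2 / (k:ℝ) + 1) atTop (nhds 1) := by
    simpa using t0.add (tendsto_const_nhds (x := (1:ℝ)))
  have t1' : Tendsto (fun k : ℕ => (R ^ 2 * w ^ 2 / (k:ℝ) + 1) ^ 2) atTop (nhds 1) := by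
    have := t1.pow 2
    simpa using this
  have t2 : Tendsto (fun k : ℕ => (1 + w ^ 2 / (k:ℝ)) ^ k) atTop (nhds (Real.exp (w ^ 2))) :=
    Real.tendsto_one_add_div_pow_exp (w ^ 2)
  have t3 : Tendsto (fun k : ℕ => 1 + w ^ 2 / (k:ℝ)) atTop (nhds 1) := by
    simpa using (tendsto_const_div_atTop_nhds_zero_nat (w ^ 2)).const_add (1:ℝ)
  have t4 : Tendsto (fun k : ℕ => (1 + w ^ 2 / (k:ℝ)) ^ (k + 1)) atTop
      (nhds (Real.exp (w ^ 2))) := by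
    have := t2.mul t3
    simp only [mul_one] at this
    refine this.congr fun k => (pow_succ _ _).symm
  have tden : Tendsto (fun k : ℕ => (R ^ 2 * w ^ 2 / (k:ℝ) + 1) ^ 2 * (1 + w ^ 2 / (k:ℝ)) ^ (k + 1))
      atTop (nhds (Real.exp (w ^ 2))) := by
    have := t1'.mul t4
    simpa using this
  have hexp : Real.exp (w ^ 2) ≠ 0 := (Real.exp_pos _).ne'
  have := (tendsto_const_nhds (x := w ^ 4)).div tden hexp
  exact this

lemma psi_nonneg (R : ℝ) (k : ℕ) (w : ℝ) : 0 ≤ psi R k w := by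
  unfold psi
  positivity

lemma psi_cont (R : ℝ) (k : ℕ) : Continuous (psi R k) := by
  unfold psi
  refine Continuous.div (by continuity) (by continuity) fun w => ?_
  have h1 : (0:ℝ) < R ^ 2 * w ^ 2 / k + 1 := by positivity
  have h2 : (0:ℝ) < 1 + w ^ 2 / k := by positivity
  positivity

lemma cc_tendsto (r : ℕ) (hr : 1 ≤ r) :
    Tendsto (fun k : ℕ => (k:ℝ) ^ (5/2 : ℝ) * cc r k) atTop
      (nhds (3 * r / (2 * Real.sqrt π))) := by
  have hlim : Tendsto (fun k : ℕ => ∫ w in Ioi (0:ℝ), psi r k w) atTop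
      (nhds (∫ w in Ioi (0:ℝ), w ^ 4 / Real.exp (w ^ 2))) := by
    refine tendsto_integral_filter_of_dominated_convergence
      (fun w => 128 * w ^ 4 / (64 + w ^ 6)) ?_ ?_ bound_integrable ?_
    · exact Eventually.of_forall fun k => (psi_cont r k).aestronglyMeasurable.restrict
    · filter_upwards [eventually_ge_atTop 12] with k hk
      refine (ae_restrict_mem measurableSet_Ioi).mono fun w hw => ?_
      rw [Real.norm_of_nonneg (psi_nonneg r k w)]
      exact psi_le_bound r k hk w (le_of_lt hw)
    · exact Eventually.of_forall fun w => psi_tendsto r w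
  have hval : (∫ w in Ioi (0:ℝ), w ^ 4 / Real.exp (w ^ 2)) = 3 / 8 * Real.sqrt π := by
    have h := integral_rpow_mul_exp_neg_rpow (p := 2) (q := 4) (by norm_num) (by norm_num)
    have hcongr : (∫ w in Ioi (0:ℝ), w ^ 4 / Real.exp (w ^ 2))
        = ∫ x in Ioi (0:ℝ), x ^ (4:ℝ) * Real.exp (-x ^ (2:ℝ)) := by
      refine setIntegral_congr_fun measurableSet_Ioi fun w hw => ?_
      have hw0 : (0:ℝ) < w := hw
      have e4 : w ^ (4:ℝ) = w ^ (4:ℕ) := by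
        rw [← Real.rpow_natCast w 4]; norm_num
      have e2 : w ^ (2:ℝ) = w ^ (2:ℕ) := by
        rw [← Real.rpow_natCast w 2]; norm_num
      rw [e4, e2, Real.exp_neg, div_eq_mul_inv]
    rw [hcongr, h]
    have h1 : Real.Gamma ((4 + 1) / 2) = 3 / 2 * Real.Gamma (3 / 2) := by
      rw [show ((4:ℝ) + 1) / 2 = 3 / 2 + 1 by norm_num, Real.Gamma_add_one (by norm_num)]
    have h2 : Real.Gamma (3 / 2) = 1 / 2 * Real.Gamma (1 / 2) := by
      rw [show (3 / 2 : ℝ) = 1 / 2 + 1 by norm_num, Real.Gamma_add_one (by norm_num)]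
    rw [h1, h2, Real.Gamma_one_half_eq]
    ring
  rw [hval] at hlim
  have hfinal := hlim.const_mul (4 * (r:ℝ) / π)
  have hvaleq : (4 * (r:ℝ) / π) * (3 / 8 * Real.sqrt π) = 3 * r / (2 * Real.sqrt π) := by
    have hππ : Real.sqrt π * Real.sqrt π = π := Real.mul_self_sqrt Real.pi_pos.le
    have hπ0 : π ≠ 0 := Real.pi_ne_zero
    have hs0 : Real.sqrt π ≠ 0 := by
      intro h
      rw [h] at hππ
      simp at hππ
      exact hπ0 hππ.symm
    rw [div_mul_eq_mul_div, div_mul_eq_mul_div, div_eq_div_iff (by positivity) (by positivity)]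
    nlinarith [hππ, Real.sq_sqrt Real.pi_pos.le, Real.sqrt_nonneg π]
  rw [hvaleq] at hfinal
  refine Tendsto.congr' ?_ hfinal
  filter_upwards [eventually_ge_atTop 1] with k hk
  exact (cc_eq r k hk).symm


/-- If a nonnegative sequence (a_k) satisfies
∑ a_k·x^k = 1 − (r + 1/√(1−x))^{−2} for all x ∈ [0,1), with r ≥ 1 fixed, then
a_k ~ (3r/(2√π))·k^{−5/2} as k → ∞, i.e. k^{5/2}·a_k → 3r/(2√π). -/
theorem coefficient_asymptotics (r : ℕ) (hr : 1 ≤ r) (a : ℕ → ℝ)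
    (ha : ∀ k, 0 ≤ a k)
    (hsum : ∀ x : ℝ, 0 ≤ x → x < 1 →
      HasSum (fun k : ℕ => a k * x ^ k)
        (1 - ((r : ℝ) + 1 / Real.sqrt (1 - x)) ^ (-2 : ℤ))) :
    Filter.Tendsto (fun k : ℕ => (k : ℝ) ^ (5 / 2 : ℝ) * a k) Filter.atTop
      (nhds (3 * r / (2 * Real.sqrt Real.pi))) := by
  set R : ℝ := (r : ℝ) with hRdef
  have hR : (1:ℝ) ≤ R := by rw [hRdef]; exact_mod_cast hr
  have hR0 : (0:ℝ) < R := lt_of_lt_of_le one_pos hR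
  set cseq : ℕ → ℝ := fun k => if k = 0 then cc r 0 + (R ^ 2 - 1) / R ^ 2 else cc r k with hcseq
  have hcnonneg : ∀ k, 0 ≤ cseq k := by
    intro k
    by_cases hk : k = 0
    · have h1 : 0 ≤ cc r 0 := cc_nonneg r 0
      have h2 : (0:ℝ) ≤ (R ^ 2 - 1) / R ^ 2 := by
        apply div_nonneg _ (by positivity)
        nlinarith
      simp only [hcseq, hk, if_pos]
      linarith
    · simp only [hcseq, if_neg hk]
      exact cc_nonneg r k
  -- HasSum for cseq
  have hcsum : ∀ x : ℝ, 0 < x → x < 2⁻¹ →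
      HasSum (fun k : ℕ => cseq k * x ^ k)
        (1 - (R + 1 / Real.sqrt (1 - x)) ^ (-2 : ℤ)) := by
    intro x hx0 hx1
    have hx1' : x < 1 := lt_trans hx1 (by norm_num)
    have h1x : 0 < 1 - x := by linarith
    set b : ℝ := Real.sqrt (1 - x) with hbdef
    have hb0 : 0 < b := Real.sqrt_pos.2 h1x
    have hG := hasSum_cc r hr x hx0 hx1
    have hdelta : HasSum (fun k : ℕ => (if k = 0 then (R ^ 2 - 1) / R ^ 2 else 0) * x ^ k)
        ((R ^ 2 - 1) / R ^ 2) := by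
      have hfn : (fun k : ℕ => (if k = 0 then (R ^ 2 - 1) / R ^ 2 else 0) * x ^ k)
          = fun k : ℕ => if k = 0 then (R ^ 2 - 1) / R ^ 2 else 0 := by
        funext k
        by_cases hk : k = 0
        · simp [hk]
        · simp [hk]
      rw [hfn]
      exact hasSum_ite_eq 0 _
    have htotal := hG.add hdelta
    have hfun : (fun k : ℕ => cc r k * x ^ k + (if k = 0 then (R ^ 2 - 1) / R ^ 2 else 0) * x ^ k)
        = fun k : ℕ => cseq k * x ^ k := by
      funext k
      by_cases hk : k = 0
      · simp only [hcseq, hk, if_pos]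
        ring
      · simp only [hcseq, if_neg hk]
        ring
    rw [hfun] at htotal
    have hvaleq : (1 + 2 * R * b) / (R ^ 2 * (1 + R * b) ^ 2) + (R ^ 2 - 1) / R ^ 2
        = 1 - (R + 1 / b) ^ (-2 : ℤ) := by
      have h1Rb : (0:ℝ) < 1 + R * b := by positivity
      have hz : (R + 1 / b) ^ (-2 : ℤ) = b ^ 2 / (1 + R * b) ^ 2 := by
        rw [zpow_neg, show ((2:ℤ) = (2:ℕ)) from rfl, zpow_natCast]
        have : R + 1 / b = (1 + R * b) / b := by
          field_simp
          ring
        rw [this, div_pow, inv_div]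
      rw [hz]
      field_simp
      ring
    rw [hvaleq] at htotal
    exact htotal
  -- uniqueness
  have haeq : ∀ n, a n = cseq n := by
    intro n
    refine coeff_unique n a cseq ha hcnonneg ?_ ?_ ?_
    · intro x hx0 hx1
      exact (hsum x hx0.le (lt_trans hx1 (by norm_num))).summable
    · intro x hx0 hx1
      exact (hcsum x hx0 hx1).summable
    · intro x hx0 hx1
      rw [(hsum x hx0.le (lt_trans hx1 (by norm_num))).tsum_eq, (hcsum x hx0 hx1).tsum_eq]
  have hcc := cc_tendsto r hr
  refine Tendsto.congr' ?_ hcc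
  filter_upwards [Filter.eventually_ge_atTop 1] with k hk
  have hk0 : k ≠ 0 := by omega
  rw [haeq k, hcseq]
  simp only [if_neg hk0]
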